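/- Let M be the perfect matching of the prism C_{2m} □ P₂ (m ≥ 1) consisting of all 2m rung edges. Then C_{2m} □ P₂ contains m pairwise vertex-disjoint M-alternating cycles, and hence every forcing set of M has size at least m. -/

import Mathlib

open SimpleGraph

variable {V : Type*}

/-- `S` is a forcing set of the perfect matching `M` of `G`: a subset of the edges of `M`
contained in no other perfect matching of `G`. -/
def IsForcingSet (G : SimpleGraph V) (M : G.Subgraph) (S : Set (Sym2 V)) : Prop :=
  S ⊆ M.edgeSet ∧ ∀ M' : G.Subgraph, M'.IsPerfectMatching → S ⊆ M'.edgeSet → M' = M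

/-- The forcing number of a perfect matching: minimum size of a forcing set. -/
noncomputable def forcingNum (G : SimpleGraph V) (M : G.Subgraph) : ℕ :=
  sInf {k | ∃ S : Set (Sym2 V), IsForcingSet G M S ∧ S.ncard = k}

/-- The maximum forcing number of `G`. -/
noncomputable def maxForcingNum (G : SimpleGraph V) : ℕ :=
  sSup {k | ∃ M : G.Subgraph, M.IsPerfectMatching ∧ forcingNum G M = k}

/-- The edges of the list `l`, read cyclically, alternate in and out of the edge set `M`. -/
def CyclicAlt (M : Set (Sym2 V)) (l : List (Sym2 V)) : Prop :=
  (l ++ l.take 1).Chain' (fun e f => (e ∈ M) ↔ (f ∉ M))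

namespace Stmt17Aux

def rungE (m : ℕ) (c : Fin (2 * m)) : Sym2 (Fin (2 * m) × Fin 2) :=
  s((c, (0 : Fin 2)), (c, (1 : Fin 2)))

lemma cyc_adj_succ {m : ℕ} {a b : Fin (2 * m)} (h : a.val + 1 = b.val) :
    (cycleGraph (2 * m)).Adj a b := by
  rw [cycleGraph_adj']
  right
  rw [Fin.sub_def]
  have hb := b.isLt
  have ha := a.isLt
  simp only
  have h1 : 2 * m - a.val + b.val = 2 * m + 1 := by omega
  rw [h1, Nat.add_mod_left, Nat.mod_eq_of_lt (by omega)]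

lemma hadj {m : ℕ} {a b : Fin (2 * m)} (h : a.val + 1 = b.val) (j : Fin 2) :
    (cycleGraph (2 * m) □ pathGraph 2).Adj (a, j) (b, j) :=
  SimpleGraph.boxProd_adj.mpr (Or.inl ⟨cyc_adj_succ h, rfl⟩)

lemma path2_adj {j k : Fin 2} (h : j ≠ k) : (pathGraph 2).Adj j k := by
  rw [pathGraph_adj]
  have hj := j.isLt
  have hk := k.isLt
  have : j.val ≠ k.val := fun hh => h (Fin.ext hh)
  omega

lemma vadj {m : ℕ} (c : Fin (2 * m)) :
    (cycleGraph (2 * m) □ pathGraph 2).Adj (c, 0) (c, 1) :=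
  SimpleGraph.boxProd_adj.mpr (Or.inr ⟨path2_adj (show (0:Fin 2) ≠ 1 by decide), rfl⟩)

lemma rung_eq_rung_iff {m : ℕ} {c c' : Fin (2 * m)} : rungE m c = rungE m c' ↔ c = c' := by
  constructor
  · intro h
    simp only [rungE, Sym2.eq_iff, Prod.mk.injEq] at h
    rcases h with ⟨⟨h1, _⟩, _⟩ | ⟨⟨_, h2⟩, _⟩
    · exact h1
    · exact absurd h2 (by decide)
  · rintro rfl; rfl

def colA (m : ℕ) (i : Fin m) : Fin (2 * m) := ⟨2 * i.val, by have := i.isLt; omega⟩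
def colB (m : ℕ) (i : Fin m) : Fin (2 * m) := ⟨2 * i.val + 1, by have := i.isLt; omega⟩

def cyc4 (m : ℕ) (i : Fin m) :
    (cycleGraph (2 * m) □ pathGraph 2).Walk (colA m i, 0) (colA m i, 0) :=
  .cons (hadj (a := colA m i) (b := colB m i) rfl 0)
    (.cons (vadj (colB m i))
      (.cons (hadj (a := colA m i) (b := colB m i) rfl 1).symm
        (.cons (vadj (colA m i)).symm .nil)))

lemma cyc4_edges (m : ℕ) (i : Fin m) : (cyc4 m i).edges =
    [s((colA m i, 0), (colB m i, 0)), s((colB m i, 0), (colB m i, 1)),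
     s((colB m i, 1), (colA m i, 1)), s((colA m i, 1), (colA m i, 0))] := rfl

lemma cyc4_support (m : ℕ) (i : Fin m) : (cyc4 m i).support =
    [(colA m i, 0), (colB m i, 0), (colB m i, 1), (colA m i, 1), (colA m i, 0)] := rfl

lemma cyc4_isCycle (m : ℕ) (i : Fin m) : (cyc4 m i).IsCycle := by
  have hAB : colA m i ≠ colB m i := by simp [colA, colB, Fin.ext_iff]
  rw [Walk.isCycle_def]
  refine ⟨?_, by simp [cyc4], ?_⟩
  · rw [Walk.isTrail_def, cyc4_edges]
    simp [List.nodup_cons, Sym2.eq_iff, Prod.ext_iff, colA, colB, Fin.ext_iff]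
  · rw [cyc4_support]
    simp [List.nodup_cons, Prod.ext_iff, colA, colB, Fin.ext_iff]

def swapAdj (m : ℕ) (i : Fin m) (v w : Fin (2 * m) × Fin 2) : Prop :=
  (v.1 = w.1 ∧ v.2 ≠ w.2 ∧ v.1.val ≠ 2 * i.val ∧ v.1.val ≠ 2 * i.val + 1) ∨
  (v.2 = w.2 ∧ (v.1.val = 2 * i.val ∧ w.1.val = 2 * i.val + 1 ∨
                v.1.val = 2 * i.val + 1 ∧ w.1.val = 2 * i.val))

def swapSub (m : ℕ) (i : Fin m) : (cycleGraph (2 * m) □ pathGraph 2).Subgraph where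
  verts := Set.univ
  Adj := swapAdj m i
  adj_sub := by
    rintro ⟨c, j⟩ ⟨d, k⟩ (⟨h1, h2, _⟩ | ⟨h1, (⟨ha, hb⟩ | ⟨ha, hb⟩)⟩)
    · exact SimpleGraph.boxProd_adj.mpr (Or.inr ⟨path2_adj h2, h1⟩)
    · exact SimpleGraph.boxProd_adj.mpr (Or.inl ⟨cyc_adj_succ (by omega), h1⟩)
    · exact SimpleGraph.boxProd_adj.mpr (Or.inl ⟨(cyc_adj_succ (by omega)).symm, h1⟩)
  edge_vert := fun _ => Set.mem_univ _
  symm := by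
    constructor
    rintro ⟨c, j⟩ ⟨d, k⟩ (⟨h1, h2, h3, h4⟩ | ⟨h1, h2⟩)
    · exact Or.inl ⟨h1.symm, h2.symm, h1 ▸ h3, h1 ▸ h4⟩
    · exact Or.inr ⟨h1.symm, h2.symm.imp (fun h => ⟨h.2, h.1⟩) (fun h => ⟨h.2, h.1⟩)⟩

lemma swapSub_isPM (m : ℕ) (i : Fin m) : (swapSub m i).IsPerfectMatching := by
  rw [Subgraph.isPerfectMatching_iff]
  rintro ⟨c, j⟩
  have hi := i.isLt
  have hc := c.isLt
  have hj := j.isLt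
  by_cases h1 : c.val = 2 * i.val
  · refine ⟨(⟨2 * i.val + 1, by omega⟩, j), Or.inr ⟨rfl, Or.inl ⟨h1, rfl⟩⟩, ?_⟩
    rintro ⟨d, k⟩ hw
    dsimp only [swapSub, swapAdj] at hw
    rcases hw with ⟨hd, hk, hc1, _⟩ | ⟨hk, (⟨ha, hb⟩ | ⟨ha, hb⟩)⟩
    · exact absurd h1 hc1
    · exact Prod.ext (Fin.ext hb) hk.symm
    · omega
  · by_cases h2 : c.val = 2 * i.val + 1
    · refine ⟨(⟨2 * i.val, by omega⟩, j), Or.inr ⟨rfl, Or.inr ⟨h2, rfl⟩⟩, ?_⟩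
      rintro ⟨d, k⟩ hw
      dsimp only [swapSub, swapAdj] at hw
      rcases hw with ⟨hd, hk, _, hc2⟩ | ⟨hk, (⟨ha, hb⟩ | ⟨ha, hb⟩)⟩
      · exact absurd h2 hc2
      · omega
      · exact Prod.ext (Fin.ext hb) hk.symm
    · refine ⟨(c, ⟨1 - j.val, by omega⟩), Or.inl ⟨rfl, ?_, h1, h2⟩, ?_⟩
      · intro h
        have := congrArg Fin.val h
        simp only at this
        omega
      · rintro ⟨d, k⟩ hw
        dsimp only [swapSub, swapAdj] at hw
        rcases hw with ⟨hd, hk, _, _⟩ | ⟨hk, (⟨ha, hb⟩ | ⟨ha, hb⟩)⟩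
        · refine Prod.ext hd.symm (Fin.ext ?_)
          have hkv : j.val ≠ k.val := fun hh => hk (Fin.ext hh)
          have := k.isLt
          simp only
          omega
        · exact absurd ha h1
        · exact absurd ha h2

end Stmt17Aux

open Stmt17Aux in
/-- in the even prism `C_{2m} □ P₂`, the rung perfect matching admits `m`
pairwise vertex-disjoint alternating cycles, so every forcing set has size at least `m`. -/
theorem stmt17 (m : ℕ) (hm : 1 ≤ m)
    (M : (cycleGraph (2 * m) □ pathGraph 2).Subgraph)
    (hverts : M.verts = Set.univ)
    (hedges : M.edgeSet =
      {e | ∃ c : Fin (2 * m), e = s((c, (0 : Fin 2)), (c, (1 : Fin 2)))}) :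
    M.IsPerfectMatching ∧
    (∃ f : Fin m → Σ v : Fin (2 * m) × Fin 2, (cycleGraph (2 * m) □ pathGraph 2).Walk v v,
      (∀ i, (f i).2.IsCycle ∧ CyclicAlt M.edgeSet (f i).2.edges) ∧
      (∀ i j, i ≠ j → ∀ x, x ∈ (f i).2.support → x ∉ (f j).2.support)) ∧
    ∀ S : Set (Sym2 (Fin (2 * m) × Fin 2)),
      IsForcingSet (cycleGraph (2 * m) □ pathGraph 2) M S → m ≤ S.ncard := by
  classical
  have hmem : ∀ e, e ∈ M.edgeSet ↔ ∃ c : Fin (2 * m), e = rungE m c := by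
    intro e; rw [hedges]; exact Iff.rfl
  have rmem : ∀ c : Fin (2 * m), rungE m c ∈ M.edgeSet := fun c => (hmem _).mpr ⟨c, rfl⟩
  have hnot : ∀ (a b : Fin (2 * m)) (j : Fin 2), s((a, j), (b, j)) ∉ M.edgeSet := by
    intro a b j h
    obtain ⟨c, hc⟩ := (hmem _).mp h
    simp only [rungE, Sym2.eq_iff, Prod.mk.injEq] at hc
    rcases hc with ⟨⟨_, h1⟩, ⟨_, h2⟩⟩ | ⟨⟨_, h1⟩, ⟨_, h2⟩⟩ <;>
      · rw [h1] at h2; exact absurd h2 (by decide)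
  refine ⟨?_, ?_, ?_⟩
  · -- perfect matching
    rw [Subgraph.isPerfectMatching_iff]
    rintro ⟨c, j⟩
    fin_cases j
    · refine ⟨(c, 1), Subgraph.mem_edgeSet.mp (rmem c), ?_⟩
      rintro ⟨d, k⟩ hw
      obtain ⟨c', hc⟩ := (hmem _).mp (Subgraph.mem_edgeSet.mpr hw)
      simp only [rungE, Sym2.eq_iff, Prod.mk.injEq] at hc
      rcases hc with ⟨⟨hc1, _⟩, ⟨hd1, hk1⟩⟩ | ⟨⟨_, h01⟩, _⟩
      · subst hc1; exact Prod.ext hd1 hk1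
      · exact absurd h01 (by decide)
    · refine ⟨(c, 0), (Subgraph.mem_edgeSet.mp (rmem c)).symm, ?_⟩
      rintro ⟨d, k⟩ hw
      obtain ⟨c', hc⟩ := (hmem _).mp (Subgraph.mem_edgeSet.mpr hw)
      simp only [rungE, Sym2.eq_iff, Prod.mk.injEq] at hc
      rcases hc with ⟨⟨_, h01⟩, _⟩ | ⟨⟨hc1, _⟩, ⟨hd1, hk1⟩⟩
      · exact absurd h01 (by decide)
      · subst hc1; exact Prod.ext hd1 hk1
  · -- the m disjoint alternating cycles
    refine ⟨fun i => ⟨(colA m i, 0), cyc4 m i⟩, fun i => ⟨cyc4_isCycle m i, ?_⟩, ?_⟩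
    · have hm1 : s((colA m i, (0:Fin 2)), (colB m i, 0)) ∉ M.edgeSet := hnot _ _ _
      have hm2 : s((colB m i, (0:Fin 2)), (colB m i, 1)) ∈ M.edgeSet := rmem (colB m i)
      have hm3 : s((colB m i, (1:Fin 2)), (colA m i, 1)) ∉ M.edgeSet := hnot _ _ _
      have hm4 : s((colA m i, (1:Fin 2)), (colA m i, 0)) ∈ M.edgeSet := by
        have h : s((colA m i, (1:Fin 2)), (colA m i, 0)) = rungE m (colA m i) :=
          Sym2.eq_swap
        rw [h]; exact rmem _
      show CyclicAlt M.edgeSet (cyc4 m i).edges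
      rw [CyclicAlt, cyc4_edges]
      simp only [List.Chain', List.take, List.cons_append, List.nil_append, List.isChain_cons_cons,
        List.isChain_singleton, and_true]
      tauto
    · intro i j hij x hxi hxj
      have hvij : i.val ≠ j.val := fun h => hij (Fin.ext h)
      have hx1 : x.1.val = 2 * i.val ∨ x.1.val = 2 * i.val + 1 := by
        have : x ∈ (cyc4 m i).support := hxi
        rw [cyc4_support] at this
        simp only [List.mem_cons, List.not_mem_nil, or_false] at this
        rcases this with h | h | h | h | h <;> rw [h] <;> simp [colA, colB]
      have hx2 : x.1.val = 2 * j.val ∨ x.1.val = 2 * j.val + 1 := by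
        have : x ∈ (cyc4 m j).support := hxj
        rw [cyc4_support] at this
        simp only [List.mem_cons, List.not_mem_nil, or_false] at this
        rcases this with h | h | h | h | h <;> rw [h] <;> simp [colA, colB]
      omega
  · -- forcing number bound
    rintro S ⟨hSsub, hSforce⟩
    have key : ∀ i : Fin m, rungE m (colA m i) ∈ S ∨ rungE m (colB m i) ∈ S := by
      intro i
      by_contra hcon
      push_neg at hcon
      obtain ⟨ha, hb⟩ := hcon
      have hsub : S ⊆ (swapSub m i).edgeSet := by
        intro e he
        obtain ⟨c, rfl⟩ := (hmem e).mp (hSsub he)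
        have hca : c.val ≠ 2 * i.val := by
          intro h
          exact ha (by rw [show colA m i = c from Fin.ext h.symm]; exact he)
        have hcb : c.val ≠ 2 * i.val + 1 := by
          intro h
          exact hb (by rw [show colB m i = c from Fin.ext h.symm]; exact he)
        show s((c, (0:Fin 2)), (c, (1:Fin 2))) ∈ (swapSub m i).edgeSet
        exact Subgraph.mem_edgeSet.mpr
          (Or.inl ⟨rfl, show (0:Fin 2) ≠ 1 by decide, hca, hcb⟩)
      have heq := hSforce (swapSub m i) (swapSub_isPM m i) hsub
      have hAdj : (swapSub m i).Adj (colA m i, 0) (colB m i, 0) :=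
        Or.inr ⟨rfl, Or.inl ⟨rfl, rfl⟩⟩
      rw [heq] at hAdj
      exact hnot _ _ _ (Subgraph.mem_edgeSet.mpr hAdj)
    let g : Fin m → {e // e ∈ S} := fun i =>
      if h : rungE m (colA m i) ∈ S then ⟨_, h⟩ else ⟨_, (key i).resolve_left h⟩
    have hgc : ∀ i, ∃ c : Fin (2 * m),
        (g i).1 = rungE m c ∧ (c.val = 2 * i.val ∨ c.val = 2 * i.val + 1) := by
      intro i
      by_cases h : rungE m (colA m i) ∈ S
      · exact ⟨colA m i, by simp [g, h], Or.inl rfl⟩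
      · exact ⟨colB m i, by simp [g, h], Or.inr rfl⟩
    have hginj : Function.Injective g := by
      intro i j hij
      obtain ⟨ci, hci, hci2⟩ := hgc i
      obtain ⟨cj, hcj, hcj2⟩ := hgc j
      have h1 : rungE m ci = rungE m cj := by rw [← hci, ← hcj, hij]
      have h2 := congrArg Fin.val (rung_eq_rung_iff.mp h1)
      exact Fin.ext (by omega)
    have hcard : m ≤ Nat.card {e // e ∈ S} := by
      have := Nat.card_le_card_of_injective g hginj
      simpa using this
    rw [← Nat.card_coe_set_eq]
    exact hcard
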